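/- The expectation of the debiased matrix S_c satisfies: for all j ≠ j̃ in [n_c], E[S_c(j,j̃)] = S̃_c(j,j̃), and for every j ∈ [n_c], E[S_c(j,j)] = S̃_c(j,j) − Σ_{l=1}^L Σ_{m=1}^{n_r} Ω_l(m,j)^2. Equivalently, E[S_c] = S̃_c − C2 where C2 is the n_c × n_c diagonal matrix with C2(j,j) = Σ_{l=1}^L Σ_{m=1}^{n_r} Ω_l(m,j)^2. -/

import Mathlib

open Matrix Finset MeasureTheory ProbabilityTheory

/-- expectation of the debiased matrix `S_c`.
Under the multi-layer DC-ScBM, the off-diagonal entries of `E[S_c]` equal those of `S̃_c`,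
and the diagonal entries satisfy `E[S_c(j,j)] = S̃_c(j,j) − ∑_l ∑_m Ω_l(m,j)²`. -/
theorem stmt6
    (nr nc Kr Kc L : ℕ)
    (hnr : 0 < nr) (hnc : 0 < nc) (hKr : 0 < Kr) (hKc : 0 < Kc) (hL : 0 < L)
    (Zr : Matrix (Fin nr) (Fin Kr) ℝ) (Zc : Matrix (Fin nc) (Fin Kc) ℝ)
    (hZr01 : ∀ i k, Zr i k = 0 ∨ Zr i k = 1)
    (hZrrow : ∀ i, ∃! k, Zr i k = 1)
    (hZrcol : ∀ k, ∃ i, Zr i k = 1)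
    (hZc01 : ∀ j k, Zc j k = 0 ∨ Zc j k = 1)
    (hZcrow : ∀ j, ∃! k, Zc j k = 1)
    (hZccol : ∀ k, ∃ j, Zc j k = 1)
    (θr : Fin nr → ℝ) (θc : Fin nc → ℝ)
    (hθr : ∀ i, 0 < θr i ∧ θr i ≤ 1) (hθc : ∀ j, 0 < θc j ∧ θc j ≤ 1)
    (B : Fin L → Matrix (Fin Kr) (Fin Kc) ℝ)
    (hB01 : ∀ l k k', 0 ≤ B l k k' ∧ B l k k' ≤ 1)
    (Ωm : Fin L → Matrix (Fin nr) (Fin nc) ℝ)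
    (hΩm : ∀ l, Ωm l = Matrix.diagonal θr * Zr * B l * (Zc)ᵀ * Matrix.diagonal θc)
    (Stc : Matrix (Fin nc) (Fin nc) ℝ)
    (hStc : Stc = ∑ l, (Ωm l)ᵀ * Ωm l)
    -- the random adjacency matrices
    (Ω' : Type) [MeasurableSpace Ω'] (μ : Measure Ω') [IsProbabilityMeasure μ]
    (A : Fin L → Ω' → Matrix (Fin nr) (Fin nc) ℝ)
    (hA01 : ∀ l ω i j, A l ω i j = 0 ∨ A l ω i j = 1)
    (hAmeas : ∀ l i j, Measurable (fun ω => A l ω i j))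
    (hABer : ∀ l i j, μ {ω | A l ω i j = 1} = ENNReal.ofReal (Ωm l i j))
    (hAindep : iIndepFun
      (fun p : Fin L × Fin nr × Fin nc => fun ω => A p.1 ω p.2.1 p.2.2) μ)
    -- the debiased matrix `S_c`
    (Sc : Ω' → Matrix (Fin nc) (Fin nc) ℝ)
    (hSc : ∀ ω, Sc ω = ∑ l, ((A l ω)ᵀ * A l ω
      - Matrix.diagonal (fun j => ∑ i, A l ω i j))) :
    (∀ j j₂ : Fin nc, j ≠ j₂ → (∫ ω, Sc ω j j₂ ∂μ) = Stc j j₂) ∧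
    (∀ j : Fin nc, (∫ ω, Sc ω j j ∂μ) = Stc j j - ∑ l, ∑ m, (Ωm l m j) ^ 2) := by

  -- nonnegativity of entries
  have hZrnn : ∀ i k, 0 ≤ Zr i k := by
    intro i k; rcases hZr01 i k with h | h <;> simp [h]
  have hZcnn : ∀ j k, 0 ≤ Zc j k := by
    intro j k; rcases hZc01 j k with h | h <;> simp [h]
  have hΩnn : ∀ l i j, 0 ≤ Ωm l i j := by
    intro l i j
    have hdiagr : ∀ a b, 0 ≤ Matrix.diagonal θr a b := by
      intro a b; rw [Matrix.diagonal_apply]; split_ifs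
      exacts [(hθr _).1.le, le_rfl]
    have hdiagc : ∀ a b, 0 ≤ Matrix.diagonal θc a b := by
      intro a b; rw [Matrix.diagonal_apply]; split_ifs
      exacts [(hθc _).1.le, le_rfl]
    rw [hΩm]
    simp only [Matrix.mul_apply, Matrix.transpose_apply]
    refine Finset.sum_nonneg fun x _ => mul_nonneg ?_ (hdiagc x j)
    refine Finset.sum_nonneg fun k _ => mul_nonneg ?_ (hZcnn x k)
    refine Finset.sum_nonneg fun k' _ => mul_nonneg ?_ (hB01 l k' k).1
    exact Finset.sum_nonneg fun i' _ => mul_nonneg (hdiagr i i') (hZrnn i' k')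
  -- integrability
  have hintA : ∀ l (i : Fin nr) (j : Fin nc), Integrable (fun ω => A l ω i j) μ := by
    intro l i j
    refine (integrable_const (1 : ℝ)).mono' (hAmeas l i j).aestronglyMeasurable ?_
    filter_upwards with ω
    rcases hA01 l ω i j with h | h <;> simp [h]
  have hintP : ∀ l (m : Fin nr) (j j₂ : Fin nc),
      Integrable (fun ω => A l ω m j * A l ω m j₂) μ := by
    intro l m j j₂
    refine (integrable_const (1 : ℝ)).mono'
      (((hAmeas l m j).mul (hAmeas l m j₂)).aestronglyMeasurable) ?_
    filter_upwards with ω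
    rcases hA01 l ω m j with h | h <;> rcases hA01 l ω m j₂ with h2 | h2 <;>
      simp [h, h2]
  -- expectation of a single entry
  have hE : ∀ l (i : Fin nr) (j : Fin nc), (∫ ω, A l ω i j ∂μ) = Ωm l i j := by
    intro l i j
    have hset : MeasurableSet {ω | A l ω i j = 1} :=
      (hAmeas l i j) (measurableSet_singleton 1)
    have heq : (fun ω => A l ω i j)
        = Set.indicator {ω | A l ω i j = 1} (fun _ => (1 : ℝ)) := by
      funext ω
      rcases hA01 l ω i j with h | h <;>
        simp [Set.indicator, Set.mem_setOf_eq, h]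
    rw [heq, MeasureTheory.integral_indicator_const _ hset, measureReal_def, hABer,
      smul_eq_mul, mul_one, ENNReal.toReal_ofReal (hΩnn l i j)]
  -- expectation of products for distinct columns
  have hEP : ∀ l (m : Fin nr) (j j₂ : Fin nc), j ≠ j₂ →
      (∫ ω, A l ω m j * A l ω m j₂ ∂μ) = Ωm l m j * Ωm l m j₂ := by
    intro l m j j₂ hne
    have hpne : ((l, m, j) : Fin L × Fin nr × Fin nc) ≠ (l, m, j₂) := by
      simp [Prod.ext_iff, hne]
    have hind : IndepFun (fun ω => A l ω m j) (fun ω => A l ω m j₂) μ :=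
      hAindep.indepFun hpne
    have h := hind.integral_mul_eq_mul_integral (hAmeas l m j).aestronglyMeasurable
      (hAmeas l m j₂).aestronglyMeasurable
    simpa [Pi.mul_apply, hE] using h
  constructor
  · intro j j₂ hne
    have hexp : ∀ ω, Sc ω j j₂ = ∑ l, ∑ m, A l ω m j * A l ω m j₂ := by
      intro ω
      rw [hSc]
      simp [Matrix.sum_apply, Matrix.sub_apply, Matrix.mul_apply,
        Matrix.transpose_apply, Matrix.diagonal_apply_ne _ hne]
    have hint2 : ∀ l ∈ Finset.univ (α := Fin L),
        Integrable (fun ω => ∑ m, A l ω m j * A l ω m j₂) μ := by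
      intro l _
      exact integrable_finset_sum _ (fun m _ => hintP l m j j₂)
    calc (∫ ω, Sc ω j j₂ ∂μ)
        = ∫ ω, ∑ l, ∑ m, A l ω m j * A l ω m j₂ ∂μ := by
          refine integral_congr_ae (Filter.Eventually.of_forall fun ω => hexp ω)
      _ = ∑ l, ∑ m, ∫ ω, A l ω m j * A l ω m j₂ ∂μ := by
          rw [MeasureTheory.integral_finset_sum _ hint2]
          exact Finset.sum_congr rfl fun l _ =>
            MeasureTheory.integral_finset_sum _ (fun m _ => hintP l m j j₂)
      _ = ∑ l, ∑ m, Ωm l m j * Ωm l m j₂ := by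
          exact Finset.sum_congr rfl fun l _ =>
            Finset.sum_congr rfl fun m _ => hEP l m j j₂ hne
      _ = Stc j j₂ := by
          rw [hStc]
          simp [Matrix.sum_apply, Matrix.mul_apply, Matrix.transpose_apply]
  · intro j
    have hzero : ∀ ω, Sc ω j j = 0 := by
      intro ω
      rw [hSc]
      have h1 : ∀ l m, A l ω m j * A l ω m j = A l ω m j := by
        intro l m; rcases hA01 l ω m j with h | h <;> simp [h]
      simp [Matrix.sum_apply, Matrix.sub_apply, Matrix.mul_apply,
        Matrix.transpose_apply, Matrix.diagonal_apply_eq, h1]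
    have hS : Stc j j = ∑ l, ∑ m, (Ωm l m j) ^ 2 := by
      rw [hStc]
      simp [Matrix.sum_apply, Matrix.mul_apply, Matrix.transpose_apply, sq]
    simp [hzero, hS]
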